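/- arXiv:2509.02205 — 2 statements merged into one kernel-verified Lean document; each statement's English description precedes it below -/
import Mathlib

section
/- Let X and Y be Polish spaces, c : X×Y → [0,∞] lower semicontinuous, L : Y → [0,∞] lower semicontinuous with compact sublevel sets, and H : Y×Y → [0,∞] lower semicontinuous and symmetric. Assume Hypothesis (E) holds with Borel gluing map G and constant C > 0. Then for all μ0, μ1 ∈ P(X) with W1(μ0,μ1) < ∞, |inf_{γ ∈ P_{μ0}(X×Y)} J(γ) − inf_{γ ∈ P_{μ1}(X×Y)} J(γ)| ≤ 4C·W1(μ0,μ1) (in the sense that the two infima in [0,∞] differ by at most 4C·W1(μ0,μ1), one being finite iff the other is). -/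
open MeasureTheory Filter Topology ProbabilityTheory

section Glue
variable {X Y : Type*}
    [MetricSpace X] [CompleteSpace X] [SecondCountableTopology X]
    [MeasurableSpace X] [BorelSpace X]
    [TopologicalSpace Y] [PolishSpace Y] [MeasurableSpace Y] [BorelSpace Y]

lemma glue_exists
    (c : X × Y → ENNReal) (hc : Measurable c)
    (L : Y → ENNReal) (hL : Measurable L)
    (H : Y × Y → ENNReal) (hH : Measurable H)
    (G : X × X × Y → Y) (hGmeas : Measurable G)
    (C : ENNReal)
    (hGc : ∀ (x0 x1 : X) (y : Y), c (x1, G (x1, x0, y)) ≤ c (x0, y) + C * edist x1 x0)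
    (hGL : ∀ (x0 x1 : X) (y : Y), L (G (x1, x0, y)) ≤ L y + C * edist x1 x0)
    (hGH : ∀ (x0 x1 x0' x1' : X) (y y' : Y),
      H (G (x1, x0, y), G (x1', x0', y')) ≤ H (y, y') + C * (edist x1 x0 + edist x1' x0'))
    (μ0 μ1 : Measure X) [IsProbabilityMeasure μ0] [IsProbabilityMeasure μ1]
    (π : Measure (X × X)) [IsProbabilityMeasure π]
    (hπ0 : π.map Prod.fst = μ0) (hπ1 : π.map Prod.snd = μ1)
    (γ : Measure (X × Y)) [IsProbabilityMeasure γ] (hγ : γ.map Prod.fst = μ0) :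
    ∃ γ' : Measure (X × Y), IsProbabilityMeasure γ' ∧ γ'.map Prod.fst = μ1 ∧
      (∫⁻ p, c p ∂γ' + ∫⁻ y, L y ∂(γ'.map Prod.snd) +
        ∫⁻ q, H q ∂((γ'.map Prod.snd).prod (γ'.map Prod.snd)))
      ≤ (∫⁻ p, c p ∂γ + ∫⁻ y, L y ∂(γ.map Prod.snd) +
        ∫⁻ q, H q ∂((γ.map Prod.snd).prod (γ.map Prod.snd)))
        + 4 * C * ∫⁻ p, edist p.1 p.2 ∂π := by
  classical
  have hne : Nonempty (X × Y) := by
    by_contra h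
    rw [not_nonempty_iff] at h
    have h1 : γ Set.univ = 1 := measure_univ
    rw [Set.univ_eq_empty_iff.mpr h, measure_empty] at h1
    exact one_ne_zero h1.symm
  haveI : Nonempty Y := hne.map Prod.snd
  have hfst : γ.fst = μ0 := hγ
  set κ : Kernel X Y := γ.condKernel with hκ
  set κ' : Kernel (X × X) Y := κ.comap Prod.fst measurable_fst with hκ'
  set θ : Measure ((X × X) × Y) := π ⊗ₘ κ' with hθ
  haveI : IsProbabilityMeasure θ := by
    rw [hθ]; infer_instance
  -- the map recovering γ
  set fA : (X × X) × Y → X × Y := fun q => (q.1.1, q.2) with hfA_def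
  have hfA : Measurable fA := (measurable_fst.fst).prodMk measurable_snd
  have hA : θ.map fA = γ := by
    conv_rhs => rw [← γ.disintegrate γ.condKernel, hfst]
    ext s hs
    rw [Measure.map_apply hfA hs, Measure.compProd_apply (hfA hs),
      Measure.compProd_apply hs]
    have hint : ∀ a : X × X, κ' a (Prod.mk a ⁻¹' (fA ⁻¹' s))
        = (fun x => κ x (Prod.mk x ⁻¹' s)) a.1 := by
      intro a
      rw [hκ', Kernel.comap_apply]
      congr 1
    simp_rw [hint]
    rw [← lintegral_map (Kernel.measurable_kernel_prodMk_left hs) measurable_fst, hπ0]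
  -- gluing map
  set g : (X × X) × Y → Y := fun q => G (q.1.2, q.1.1, q.2) with hg_def
  have hg : Measurable g := hGmeas.comp
    ((measurable_fst.snd).prodMk ((measurable_fst.fst).prodMk measurable_snd))
  set f : (X × X) × Y → X × Y := fun q => (q.1.2, g q) with hf_def
  have hf : Measurable f := (measurable_fst.snd).prodMk hg
  refine ⟨θ.map f, Measure.isProbabilityMeasure_map hf.aemeasurable, ?_, ?_⟩
  · rw [Measure.map_map measurable_fst hf]
    have : (Prod.fst ∘ f) = (Prod.snd ∘ (Prod.fst : (X × X) × Y → X × X)) := rfl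
    rw [this, ← Measure.map_map measurable_snd measurable_fst]
    have hfstθ : θ.map Prod.fst = π := Measure.fst_compProd π κ'
    rw [hfstθ, hπ1]
  · set W := ∫⁻ p, edist p.1 p.2 ∂π with hW_def
    have hfstθ : θ.map Prod.fst = π := Measure.fst_compProd π κ'
    have hsnd : θ.map (Prod.snd : (X × X) × Y → Y) = γ.map Prod.snd := by
      rw [← hA, Measure.map_map measurable_snd hfA]
      rfl
    have he : Measurable fun q : (X × X) × Y => edist q.1.2 q.1.1 :=
      (measurable_fst.snd).edist (measurable_fst.fst)
    have hW' : ∫⁻ q, edist q.1.2 q.1.1 ∂θ = W := by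
      have h1 : ∫⁻ a : X × X, edist a.2 a.1 ∂(θ.map Prod.fst)
          = ∫⁻ q, edist q.1.2 q.1.1 ∂θ :=
        lintegral_map (measurable_snd.edist measurable_fst) measurable_fst
      rw [← h1, hfstθ]
      exact lintegral_congr fun a => edist_comm _ _
    -- the c term
    have hcterm : ∫⁻ p, c p ∂(θ.map f) ≤ ∫⁻ p, c p ∂γ + C * W := by
      rw [lintegral_map hc hf]
      calc ∫⁻ q, c (f q) ∂θ
          ≤ ∫⁻ q, (c (fA q) + C * edist q.1.2 q.1.1) ∂θ :=
            lintegral_mono fun q => hGc q.1.1 q.1.2 q.2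
        _ = ∫⁻ q, c (fA q) ∂θ + C * ∫⁻ q, edist q.1.2 q.1.1 ∂θ := by
            rw [lintegral_add_left (show Measurable fun q : (X × X) × Y => c (fA q) from hc.comp hfA), lintegral_const_mul _ he]
        _ = ∫⁻ p, c p ∂γ + C * W := by rw [← lintegral_map hc hfA, hA, hW']
    -- the L term
    have hνθ : (θ.map f).map Prod.snd = θ.map g := by
      rw [Measure.map_map measurable_snd hf]
      rfl
    have hLterm : ∫⁻ y, L y ∂((θ.map f).map Prod.snd)
        ≤ ∫⁻ y, L y ∂(γ.map Prod.snd) + C * W := by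
      rw [hνθ, lintegral_map hL hg]
      calc ∫⁻ q, L (g q) ∂θ
          ≤ ∫⁻ q, (L q.2 + C * edist q.1.2 q.1.1) ∂θ :=
            lintegral_mono fun q => hGL q.1.1 q.1.2 q.2
        _ = ∫⁻ q, L q.2 ∂θ + C * W := by
            rw [lintegral_add_left (show Measurable fun q : (X × X) × Y => L q.2 from hL.comp measurable_snd), lintegral_const_mul _ he, hW']
        _ = ∫⁻ y, L y ∂(γ.map Prod.snd) + C * W := by
            rw [← lintegral_map hL measurable_snd, hsnd]
    -- the H term
    haveI : IsProbabilityMeasure (θ.map g) := Measure.isProbabilityMeasure_map hg.aemeasurable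
    haveI : IsProbabilityMeasure (γ.map (Prod.snd : X × Y → Y)) :=
      Measure.isProbabilityMeasure_map measurable_snd.aemeasurable
    have hHγ : ∫⁻ z, H z ∂((γ.map Prod.snd).prod (γ.map Prod.snd))
        = ∫⁻ q, ∫⁻ q', H (q.2, q'.2) ∂θ ∂θ := by
      have hFmeas : Measurable fun a : Y => ∫⁻ q', H (a, q'.2) ∂θ :=
        Measurable.lintegral_prod_right
          (hH.comp (measurable_fst.prodMk (measurable_snd.snd)))
      calc ∫⁻ z, H z ∂((γ.map Prod.snd).prod (γ.map Prod.snd))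
          = ∫⁻ a, ∫⁻ b, H (a, b) ∂(γ.map Prod.snd) ∂(γ.map Prod.snd) :=
            lintegral_prod _ hH.aemeasurable
        _ = ∫⁻ a, ∫⁻ q', H (a, q'.2) ∂θ ∂(θ.map Prod.snd) := by
            rw [← hsnd]
            exact lintegral_congr fun a =>
              lintegral_map (hH.comp measurable_prodMk_left) measurable_snd
        _ = ∫⁻ q, ∫⁻ q', H (q.2, q'.2) ∂θ ∂θ := lintegral_map hFmeas measurable_snd
    have hHγ' : ∫⁻ z, H z ∂(((θ.map f).map Prod.snd).prod ((θ.map f).map Prod.snd))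
        = ∫⁻ q, ∫⁻ q', H (g q, g q') ∂θ ∂θ := by
      have hF'meas : Measurable fun a : Y => ∫⁻ q', H (a, g q') ∂θ :=
        Measurable.lintegral_prod_right
          (hH.comp (measurable_fst.prodMk (hg.comp measurable_snd)))
      rw [hνθ]
      calc ∫⁻ z, H z ∂((θ.map g).prod (θ.map g))
          = ∫⁻ a, ∫⁻ b, H (a, b) ∂(θ.map g) ∂(θ.map g) :=
            lintegral_prod _ hH.aemeasurable
        _ = ∫⁻ a, ∫⁻ q', H (a, g q') ∂θ ∂(θ.map g) :=
            lintegral_congr fun a =>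
              lintegral_map (hH.comp measurable_prodMk_left) hg
        _ = ∫⁻ q, ∫⁻ q', H (g q, g q') ∂θ ∂θ := lintegral_map hF'meas hg
    have hFq : Measurable fun q : (X × X) × Y => ∫⁻ q', H (q.2, q'.2) ∂θ :=
      Measurable.lintegral_prod_right
        (hH.comp ((measurable_fst.snd).prodMk (measurable_snd.snd)))
    have hHterm : ∫⁻ z, H z ∂(((θ.map f).map Prod.snd).prod ((θ.map f).map Prod.snd))
        ≤ ∫⁻ z, H z ∂((γ.map Prod.snd).prod (γ.map Prod.snd)) + (C * W + C * W) := by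
      rw [hHγ, hHγ']
      calc ∫⁻ q, ∫⁻ q', H (g q, g q') ∂θ ∂θ
          ≤ ∫⁻ q, ∫⁻ q', (H (q.2, q'.2)
              + (C * edist q.1.2 q.1.1 + C * edist q'.1.2 q'.1.1)) ∂θ ∂θ := by
            refine lintegral_mono fun q => lintegral_mono fun q' => ?_
            calc H (g q, g q')
                ≤ H (q.2, q'.2) + C * (edist q.1.2 q.1.1 + edist q'.1.2 q'.1.1) :=
                  hGH q.1.1 q.1.2 q'.1.1 q'.1.2 q.2 q'.2
              _ = _ := by ring
        _ = ∫⁻ q, (∫⁻ q', H (q.2, q'.2) ∂θ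
              + (C * edist q.1.2 q.1.1 + C * W)) ∂θ := by
            refine lintegral_congr fun q => ?_
            rw [lintegral_add_left (show Measurable fun q' : (X × X) × Y => H (q.2, q'.2) from hH.comp (measurable_const.prodMk measurable_snd))]
            congr 1
            rw [lintegral_add_left measurable_const, lintegral_const, measure_univ,
              mul_one, lintegral_const_mul _ he, hW']
        _ = ∫⁻ q, ∫⁻ q', H (q.2, q'.2) ∂θ ∂θ + (C * W + C * W) := by
            rw [lintegral_add_left hFq]
            congr 1
            rw [lintegral_add_right _ measurable_const, lintegral_const, measure_univ,
              mul_one, lintegral_const_mul _ he, hW']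
    calc ∫⁻ p, c p ∂(θ.map f) + ∫⁻ y, L y ∂((θ.map f).map Prod.snd)
          + ∫⁻ z, H z ∂(((θ.map f).map Prod.snd).prod ((θ.map f).map Prod.snd))
        ≤ (∫⁻ p, c p ∂γ + C * W) + (∫⁻ y, L y ∂(γ.map Prod.snd) + C * W)
          + (∫⁻ z, H z ∂((γ.map Prod.snd).prod (γ.map Prod.snd)) + (C * W + C * W)) :=
          add_le_add (add_le_add hcterm hLterm) hHterm
      _ = (∫⁻ p, c p ∂γ + ∫⁻ y, L y ∂(γ.map Prod.snd)
          + ∫⁻ z, H z ∂((γ.map Prod.snd).prod (γ.map Prod.snd))) + 4 * C * W := by ring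

end Glue


/-- **stability of the value function.** Under Hypothesis (E), the value
`inf_{P_μ(X×Y)} J` is `4C`-Lipschitz in `μ` for the 1-Wasserstein distance: for `μ0, μ1` with
`W₁(μ0,μ1) < ∞`, each of the two infima is bounded by the other plus `4 C W₁(μ0,μ1)` (in `[0,∞]`;
in particular one is finite iff the other is). -/
theorem stability_value_function
    {X Y : Type*}
    [MetricSpace X] [CompleteSpace X] [SecondCountableTopology X]
    [MeasurableSpace X] [BorelSpace X]
    [TopologicalSpace Y] [PolishSpace Y] [MeasurableSpace Y] [BorelSpace Y]
    (c : X × Y → ENNReal) (hc : LowerSemicontinuous c)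
    (L : Y → ENNReal) (hL : LowerSemicontinuous L)
    (hLcomp : ∀ κ : NNReal, 0 < κ → IsCompact {y : Y | L y ≤ (κ : ENNReal)})
    (H : Y × Y → ENNReal) (hH : LowerSemicontinuous H)
    (hHsymm : ∀ y y' : Y, H (y, y') = H (y', y))
    (J : Measure (X × Y) → ENNReal)
    (hJ : ∀ γ : Measure (X × Y), J γ =
      ∫⁻ p, c p ∂γ + ∫⁻ y, L y ∂(γ.map Prod.snd) +
        ∫⁻ q, H q ∂((γ.map Prod.snd).prod (γ.map Prod.snd)))
    -- Hypothesis (E): Borel gluing map with constant C > 0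
    (G : X × X × Y → Y) (hGmeas : Measurable G)
    (hGcons : ∀ (x : X) (y : Y), G (x, x, y) = y)
    (C : ENNReal) (hCpos : 0 < C) (hCfin : C < ⊤)
    (hGc : ∀ (x0 x1 : X) (y : Y),
      c (x1, G (x1, x0, y)) ≤ c (x0, y) + C * edist x1 x0)
    (hGL : ∀ (x0 x1 : X) (y : Y),
      L (G (x1, x0, y)) ≤ L y + C * edist x1 x0)
    (hGH : ∀ (x0 x1 x0' x1' : X) (y y' : Y),
      H (G (x1, x0, y), G (x1', x0', y')) ≤ H (y, y') + C * (edist x1 x0 + edist x1' x0'))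
    (μ0 μ1 : Measure X) [IsProbabilityMeasure μ0] [IsProbabilityMeasure μ1]
    -- the 1-Wasserstein distance between μ0 and μ1, assumed finite
    (W1 : ENNReal)
    (hW1 : W1 = ⨅ π ∈ {π : Measure (X × X) | IsProbabilityMeasure π ∧
        π.map Prod.fst = μ0 ∧ π.map Prod.snd = μ1},
      ∫⁻ p, edist p.1 p.2 ∂π)
    (hW1fin : W1 < ⊤) :
    (⨅ γ ∈ {γ : Measure (X × Y) | IsProbabilityMeasure γ ∧ γ.map Prod.fst = μ0}, J γ) ≤
      (⨅ γ ∈ {γ : Measure (X × Y) | IsProbabilityMeasure γ ∧ γ.map Prod.fst = μ1}, J γ)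
        + 4 * C * W1 ∧
    (⨅ γ ∈ {γ : Measure (X × Y) | IsProbabilityMeasure γ ∧ γ.map Prod.fst = μ1}, J γ) ≤
      (⨅ γ ∈ {γ : Measure (X × Y) | IsProbabilityMeasure γ ∧ γ.map Prod.fst = μ0}, J γ)
        + 4 * C * W1 := by
  have hcm : Measurable c := hc.measurable
  have hLm : Measurable L := hL.measurable
  have hHm : Measurable H := hH.measurable
  have h40 : (4 * C : ENNReal) ≠ 0 := by
    simp [hCpos.ne']
  have h4t : (4 * C : ENNReal) ≠ ⊤ := by
    exact ENNReal.mul_ne_top (by norm_num) hCfin.ne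
  -- the key one-sided estimate
  have key : ∀ (μa μb : Measure X) (π : Measure (X × X)),
      IsProbabilityMeasure μa → IsProbabilityMeasure μb → IsProbabilityMeasure π →
      π.map Prod.fst = μa → π.map Prod.snd = μb →
      (⨅ γ ∈ {γ : Measure (X × Y) | IsProbabilityMeasure γ ∧ γ.map Prod.fst = μb}, J γ) ≤
        (⨅ γ ∈ {γ : Measure (X × Y) | IsProbabilityMeasure γ ∧ γ.map Prod.fst = μa}, J γ)
          + 4 * C * ∫⁻ p, edist p.1 p.2 ∂π := by
    intro μa μb π ha hb hπp hπ0 hπ1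
    rw [ENNReal.iInf_add]
    refine le_iInf fun γ => ?_
    rw [ENNReal.iInf_add]
    refine le_iInf fun hγ => ?_
    haveI := ha; haveI := hb; haveI := hπp; haveI := hγ.1
    obtain ⟨γ', hp', hm', hineq⟩ :=
      glue_exists c hcm L hLm H hHm G hGmeas C hGc hGL hGH μa μb π hπ0 hπ1 γ hγ.2
    refine le_trans (iInf₂_le γ' ⟨hp', hm'⟩) ?_
    rw [hJ γ', hJ γ]
    calc ∫⁻ p, c p ∂γ' + ∫⁻ y, L y ∂(γ'.map Prod.snd) +
          ∫⁻ q, H q ∂((γ'.map Prod.snd).prod (γ'.map Prod.snd))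
        ≤ (∫⁻ p, c p ∂γ + ∫⁻ y, L y ∂(γ.map Prod.snd) +
            ∫⁻ q, H q ∂((γ.map Prod.snd).prod (γ.map Prod.snd)))
          + 4 * C * ∫⁻ p, edist p.1 p.2 ∂π := hineq
      _ = _ := by ring_nf
  -- rewriting `A + 4 C W1` as an infimum over couplings
  have hconv : ∀ A : ENNReal,
      A + 4 * C * W1 = ⨅ π ∈ {π : Measure (X × X) | IsProbabilityMeasure π ∧
          π.map Prod.fst = μ0 ∧ π.map Prod.snd = μ1},
        (A + 4 * C * ∫⁻ p, edist p.1 p.2 ∂π) := by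
    intro A
    rw [hW1]
    simp_rw [ENNReal.mul_iInf_of_ne h40 h4t, ENNReal.add_iInf]
  constructor
  · rw [hconv]
    refine le_iInf fun π => le_iInf fun hπ => ?_
    obtain ⟨hπp, hπ0, hπ1⟩ := hπ
    haveI := hπp
    haveI : IsProbabilityMeasure (π.map Prod.swap) :=
      Measure.isProbabilityMeasure_map measurable_swap.aemeasurable
    have hswapfst : (π.map Prod.swap).map Prod.fst = μ1 := by
      rw [Measure.map_map measurable_fst measurable_swap]
      exact hπ1
    have hswapsnd : (π.map Prod.swap).map Prod.snd = μ0 := by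
      rw [Measure.map_map measurable_snd measurable_swap]
      exact hπ0
    have hcost : ∫⁻ p, edist p.1 p.2 ∂(π.map Prod.swap) = ∫⁻ p, edist p.1 p.2 ∂π := by
      rw [lintegral_map (measurable_fst.edist measurable_snd) measurable_swap]
      exact lintegral_congr fun p => edist_comm _ _
    have := key μ1 μ0 (π.map Prod.swap) inferInstance inferInstance inferInstance
      hswapfst hswapsnd
    rwa [hcost] at this
  · rw [hconv]
    refine le_iInf fun π => le_iInf fun hπ => ?_
    obtain ⟨hπp, hπ0, hπ1⟩ := hπ
    exact key μ0 μ1 π inferInstance inferInstance hπp hπ0 hπ1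
end

section
/- Let (Ω,F,P) be a probability space, (𝒳,d) a Polish metric space, F : 𝒳 → ℝ∪{+∞} a functional, and F_{ω,N} : 𝒳 → ℝ∪{+∞} a family of functionals indexed by ω ∈ Ω and N ∈ ℕ. Assume: (1) there is a measurable event Ω_0 with P(Ω_0) = 1 such that for every ω ∈ Ω_0, every x ∈ 𝒳 and every sequence x_N → x in 𝒳, F(x) ≤ liminf_N F_{ω,N}(x_N); (2) for every x ∈ 𝒳 there is a measurable event Ω_x with P(Ω_x) = 1 such that for every ω ∈ Ω_x there exists a sequence x_N → x with limsup_N F_{ω,N}(x_N) ≤ F(x). Then there is a measurable event Ω̄ with P(Ω̄) = 1 such that for every ω ∈ Ω̄ the sequence F_{ω,N} Γ-converges to F: for every x ∈ 𝒳, every sequence x_N → x satisfies F(x) ≤ liminf_N F_{ω,N}(x_N), and there exists a sequence x_N → x with limsup_N F_{ω,N}(x_N) ≤ F(x). -/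
open MeasureTheory Filter Topology

lemma diag_recovery {𝒳 : Type*} [MetricSpace 𝒳] (G : ℕ → 𝒳 → EReal) (x : 𝒳) (l : ℝ)
    (h : ∀ ε : ℝ, 0 < ε → ∃ xs : ℕ → 𝒳,
      ∀ᶠ N in atTop, dist (xs N) x < ε ∧ G N (xs N) < (l : EReal) + (ε : EReal)) :
    ∃ xs : ℕ → 𝒳, Tendsto xs atTop (𝓝 x) ∧
      atTop.limsup (fun N => G N (xs N)) ≤ (l : EReal) := by
  have hpos : ∀ k : ℕ, (0:ℝ) < 1 / (k + 1) := fun k => by positivity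
  choose xs hxs using fun k : ℕ => h (1 / (k + 1)) (hpos k)
  choose Nk hNk using fun k : ℕ => (eventually_atTop.1 (hxs k))
  let M : ℕ → ℕ := fun k => Nat.rec (motive := fun _ => ℕ) (Nk 0) (fun k ih => max (Nk (k + 1)) (ih + 1)) k
  have hMmono : StrictMono M := strictMono_nat_of_lt_succ fun k =>
    lt_of_lt_of_le (Nat.lt_succ_self _) (le_max_right _ _)
  have hMN : ∀ k, Nk k ≤ M k := by
    intro k; cases k with
    | zero => exact le_rfl
    | succ k => exact le_max_left _ _
  classical
  let K : ℕ → ℕ := fun N => @Nat.findGreatest (fun k => M k ≤ N) (fun _ => Nat.decLe _ _) N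
  have hKspec : ∀ N, M 0 ≤ N → M (K N) ≤ N := fun N hN =>
    @Nat.findGreatest_spec 0 (fun k => M k ≤ N) (fun _ => Nat.decLe _ _) N (Nat.zero_le N) hN
  have hKge : ∀ k N, M k ≤ N → k ≤ K N := fun k N hk =>
    @Nat.le_findGreatest k (fun k => M k ≤ N) (fun _ => Nat.decLe _ _) N (le_trans (hMmono.le_apply) hk) hk
  set ys : ℕ → 𝒳 := fun N => xs (K N) N with hys
  have key : ∀ N, M 0 ≤ N →
      dist (ys N) x < 1 / (K N + 1) ∧
        G N (ys N) < (l : EReal) + ((1 / (K N + 1) : ℝ) : EReal) := by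
    intro N hN
    exact hNk (K N) N (le_trans (hMN _) (hKspec N hN))
  have hKtend : Tendsto K atTop atTop :=
    tendsto_atTop_atTop.2 fun k => ⟨M k, fun N hN => hKge k N hN⟩
  have hbound : Tendsto (fun N => (1 : ℝ) / (K N + 1)) atTop (𝓝 0) := by
    have := (tendsto_one_div_add_atTop_nhds_zero_nat : Tendsto (fun n : ℕ => 1 / ((n : ℝ) + 1)) atTop (𝓝 0)).comp hKtend
    exact this
  refine ⟨ys, ?_, ?_⟩
  · rw [tendsto_iff_dist_tendsto_zero]
    apply squeeze_zero' (Eventually.of_forall fun N => dist_nonneg)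
      ?_ hbound
    filter_upwards [eventually_ge_atTop (M 0)] with N hN
    exact (key N hN).1.le
  · have hk : ∀ k : ℕ, atTop.limsup (fun N => G N (ys N)) ≤ ((l + 1 / (k + 1) : ℝ) : EReal) := by
      intro k
      refine limsup_le_of_le (by isBoundedDefault) ?_
      filter_upwards [eventually_ge_atTop (M 0), eventually_ge_atTop (M k)] with N hN0 hNk'
      have h1 : (1 : ℝ) / (K N + 1) ≤ 1 / (k + 1) := by
        apply one_div_le_one_div_of_le (by positivity)
        have := hKge k N hNk'
        have h2 : (k:ℝ) ≤ K N := Nat.cast_le.2 this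
        linarith
      calc G N (ys N) ≤ (l : EReal) + ((1 / (K N + 1) : ℝ) : EReal) := (key N hN0).2.le
        _ ≤ (l : EReal) + ((1 / (k + 1) : ℝ) : EReal) := by
            exact add_le_add le_rfl (EReal.coe_le_coe_iff.2 h1)
        _ = ((l + 1 / (k + 1) : ℝ) : EReal) := by rw [EReal.coe_add]
    have hc : Tendsto (fun k : ℕ => ((l + 1 / (k + 1) : ℝ) : EReal)) atTop (𝓝 (l : EReal)) := by
      rw [EReal.tendsto_coe (f := atTop)]
      have := tendsto_const_nhds (x := l) (f := atTop (α := ℕ)) |>.add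
        tendsto_one_div_add_atTop_nhds_zero_nat
      simpa using this
    exact ge_of_tendsto' hc hk

/-- A criterion for Γ-convergence with full probability: if the Γ-liminf
inequality holds on a single event of full probability and for each point a recovery sequence
exists on an event of full probability (depending on the point), then on a single event of full
probability the whole sequence of functionals Γ-converges. -/
theorem gamma_convergence_full_probability
    {Ω : Type*} [MeasurableSpace Ω] (P : Measure Ω) [IsProbabilityMeasure P]
    {𝒳 : Type*} [MetricSpace 𝒳] [CompleteSpace 𝒳] [SecondCountableTopology 𝒳]
    (F : 𝒳 → EReal) (hF : ∀ x, F x ≠ ⊥)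
    (Fn : Ω → ℕ → 𝒳 → EReal) (hFn : ∀ ω N x, Fn ω N x ≠ ⊥)
    -- (1) Γ-liminf on a fixed event of full probability
    (Ω₀ : Set Ω) (hΩ₀meas : MeasurableSet Ω₀) (hΩ₀ : P Ω₀ = 1)
    (hliminf : ∀ ω ∈ Ω₀, ∀ x : 𝒳, ∀ xs : ℕ → 𝒳, Tendsto xs atTop (𝓝 x) →
      F x ≤ atTop.liminf fun N => Fn ω N (xs N))
    -- (2) recovery sequences on point-dependent events of full probability
    (Ωx : 𝒳 → Set Ω) (hΩxmeas : ∀ x, MeasurableSet (Ωx x)) (hΩx : ∀ x, P (Ωx x) = 1)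
    (hlimsup : ∀ x : 𝒳, ∀ ω ∈ Ωx x, ∃ xs : ℕ → 𝒳, Tendsto xs atTop (𝓝 x) ∧
      (atTop.limsup fun N => Fn ω N (xs N)) ≤ F x) :
    -- conclusion: Γ-convergence on a single event of full probability
    ∃ Ω' : Set Ω, MeasurableSet Ω' ∧ P Ω' = 1 ∧
      ∀ ω ∈ Ω',
        (∀ x : 𝒳, ∀ xs : ℕ → 𝒳, Tendsto xs atTop (𝓝 x) →
          F x ≤ atTop.liminf fun N => Fn ω N (xs N)) ∧
        (∀ x : 𝒳, ∃ xs : ℕ → 𝒳, Tendsto xs atTop (𝓝 x) ∧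
          (atTop.limsup fun N => Fn ω N (xs N)) ≤ F x) := by
  classical
  rcases isEmpty_or_nonempty 𝒳 with hE | hNE
  · exact ⟨Ω₀, hΩ₀meas, hΩ₀, fun ω hω =>
      ⟨fun x => (IsEmpty.false x).elim, fun x => (IsEmpty.false x).elim⟩⟩
  -- countable dense sequence
  let u : ℕ → 𝒳 := TopologicalSpace.denseSeq 𝒳
  have hu : DenseRange u := TopologicalSpace.denseRange_denseSeq 𝒳
  -- countable family of approximate minimizers
  let Q : ℕ × ℕ × ℚ → Prop := fun i =>
    ∃ z : 𝒳, dist z (u i.1) < 1 / (i.2.1 + 1) ∧ F z < ((i.2.2 : ℝ) : EReal)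
  let p : ℕ × ℕ × ℚ → 𝒳 := fun i => if h : Q i then h.choose else Classical.arbitrary 𝒳
  have hp : ∀ i, Q i → dist (p i) (u i.1) < 1 / (i.2.1 + 1) ∧ F (p i) < ((i.2.2 : ℝ) : EReal) := by
    intro i hi
    simp only [p, dif_pos hi]
    exact hi.choose_spec
  set Ω' : Set Ω := Ω₀ ∩ ⋂ i : ℕ × ℕ × ℚ, Ωx (p i) with hΩ'
  have hmeas : MeasurableSet Ω' := hΩ₀meas.inter (MeasurableSet.iInter fun i => hΩxmeas _)
  have hprob : P Ω' = 1 := by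
    rw [← prob_compl_eq_zero_iff hmeas]
    rw [hΩ', Set.compl_inter, Set.compl_iInter]
    apply measure_union_null
    · exact (prob_compl_eq_zero_iff hΩ₀meas).2 hΩ₀
    · exact measure_iUnion_null fun i => (prob_compl_eq_zero_iff (hΩxmeas _)).2 (hΩx _)
  refine ⟨Ω', hmeas, hprob, fun ω hω => ⟨fun x => hliminf ω hω.1 x, fun x => ?_⟩⟩
  by_cases htop : F x = ⊤
  · exact ⟨fun _ => x, tendsto_const_nhds, htop ▸ le_top⟩
  obtain ⟨l, hl⟩ : ∃ l : ℝ, F x = (l : EReal) := by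
    lift F x to ℝ using ⟨htop, hF x⟩ with l hl
    exact ⟨l, rfl⟩
  rw [hl]
  apply diag_recovery
  intro ε hε
  -- choose scales
  obtain ⟨k, hk⟩ := exists_nat_gt (4 / ε)
  have hk4 : 4 / ε < (k : ℝ) + 1 := lt_of_lt_of_le hk (by linarith)
  have hkpos : (0:ℝ) < (k:ℝ) + 1 := by positivity
  have hkey : 2 / ((k:ℝ) + 1) < ε / 2 := by
    rw [div_lt_iff₀ hkpos]
    rw [div_lt_iff₀ hε] at hk4
    nlinarith
  obtain ⟨n, hn⟩ := (Metric.denseRange_iff.1 hu) x (1 / ((k:ℝ) + 1)) (by positivity)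
  obtain ⟨r, hr1, hr2⟩ := exists_rat_btwn (show l < l + ε / 2 by linarith)
  set i : ℕ × ℕ × ℚ := (n, k, r) with hi
  have hQ : Q i := ⟨x, by simpa [dist_comm] using hn, by
    rw [hl]; exact_mod_cast EReal.coe_lt_coe_iff.2 hr1⟩
  obtain ⟨hpdist, hpF⟩ := hp i hQ
  have hωp : ω ∈ Ωx (p i) := by
    have := hω.2
    exact Set.mem_iInter.1 this i
  obtain ⟨xs, hxs_t, hxs_l⟩ := hlimsup (p i) ω hωp
  have hlimlt : (atTop.limsup fun N => Fn ω N (xs N)) < ((r : ℝ) : EReal) :=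
    lt_of_le_of_lt hxs_l hpF
  have hev1 : ∀ᶠ N in atTop, Fn ω N (xs N) < ((r : ℝ) : EReal) :=
    eventually_lt_of_limsup_lt hlimlt
  have hdpx : dist (p i) x < ε / 2 := by
    calc dist (p i) x ≤ dist (p i) (u n) + dist (u n) x := dist_triangle _ _ _
      _ < 1 / ((k:ℝ) + 1) + 1 / ((k:ℝ) + 1) := by
          apply add_lt_add hpdist (by simpa [dist_comm] using hn)
      _ = 2 / ((k:ℝ) + 1) := by ring
      _ < ε / 2 := hkey
  have hev2 : ∀ᶠ N in atTop, xs N ∈ Metric.ball (p i) (ε / 2) :=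
    hxs_t (Metric.ball_mem_nhds _ (by positivity))
  refine ⟨xs, ?_⟩
  filter_upwards [hev1, hev2] with N h1 h2
  refine ⟨?_, ?_⟩
  · have h2' : dist (xs N) (p i) < ε / 2 := h2
    calc dist (xs N) x ≤ dist (xs N) (p i) + dist (p i) x := dist_triangle _ _ _
      _ < ε / 2 + ε / 2 := add_lt_add h2' hdpx
      _ = ε := by ring
  · calc Fn ω N (xs N) < ((r : ℝ) : EReal) := h1
      _ < ((l + ε : ℝ) : EReal) := by exact_mod_cast EReal.coe_lt_coe_iff.2 (by linarith)
      _ = (l : EReal) + (ε : EReal) := by rw [EReal.coe_add]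
end
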